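/- The Mittag-Leffler polynomials M_n(x), defined by \sum_{n\ge 0} M_n(x) z^n/n! = \left(\frac{1+z}{1-z}\right)^x, satisfy M_n(x) = n! \sum_{k=1}^n \binom{n-1}{n-k} 2^k \binom{x}{k} for all n\ge 1, and M_0(x)=1. -/

import Mathlib

open PowerSeries

/-- Composition `f ∘ g` of formal power series (intended for `g` with zero
constant coefficient). -/
noncomputable def psComp (f g : PowerSeries ℂ) : PowerSeries ℂ :=
  PowerSeries.mk fun n => ∑ k ∈ Finset.range (n + 1),
    (PowerSeries.coeff k f) * (PowerSeries.coeff n (g ^ k))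

/-- `e^u` for a power series `u` with zero constant coefficient. -/
noncomputable def psExp (u : PowerSeries ℂ) : PowerSeries ℂ :=
  psComp (PowerSeries.exp ℂ) u

/-- The power series `log(1 + z) = ∑_{n≥1} (-1)^{n+1} zⁿ/n`. -/
noncomputable def logOneAdd : PowerSeries ℂ :=
  PowerSeries.mk fun n => if n = 0 then 0 else (-1) ^ (n + 1) / (n : ℂ)

/-- The power series `log(1 - z) = -∑_{n≥1} zⁿ/n`. -/
noncomputable def logOneSub : PowerSeries ℂ :=
  PowerSeries.mk fun n => if n = 0 then 0 else -(1 / (n : ℂ))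

/-- The generalized binomial coefficient `m(m-1)⋯(m-j+1)/j!`. -/
noncomputable def genBinom (m : ℂ) (j : ℕ) : ℂ :=
  (∏ i ∈ Finset.range j, (m - i)) / (j.factorial : ℂ)


open Finset
lemma ML.coeff_pow_zero (u : ℂ⟦X⟧) (hu : constantCoeff u = 0) {k n : ℕ} (h : n < k) :
    coeff n (u ^ k) = 0 := by
  obtain ⟨g, hg⟩ := pow_dvd_pow_of_dvd (X_dvd_iff.mpr hu) k
  rw [hg, coeff_X_pow_mul', if_neg (by omega)]

noncomputable def ML.S (u : ℂ⟦X⟧) (N : ℕ) : ℂ⟦X⟧ :=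
  ∑ k ∈ range (N + 1), (k.factorial : ℂ)⁻¹ • u ^ k

lemma ML.coeff_psExp (u : ℂ⟦X⟧) (hu : constantCoeff u = 0) {N n : ℕ} (h : n ≤ N) :
    coeff n (psExp u) = coeff n (ML.S u N) := by
  rw [psExp, psComp, coeff_mk, ML.S, map_sum]
  have hsub : range (n + 1) ⊆ range (N + 1) := Finset.range_subset_range.mpr (by omega)
  rw [Finset.sum_subset hsub (fun k _ hk => by
    rw [ML.coeff_pow_zero u hu (by simpa using hk), mul_zero])]
  apply Finset.sum_congr rfl
  intro k _
  rw [coeff_smul, PowerSeries.coeff_exp, smul_eq_mul]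
  push_cast
  rw [one_div]

lemma ML.deriv_psExp (u : ℂ⟦X⟧) (hu : constantCoeff u = 0) :
    d⁄dX ℂ (psExp u) = d⁄dX ℂ u * psExp u := by
  ext n
  have h1 : coeff n (d⁄dX ℂ (psExp u)) = coeff n (d⁄dX ℂ (ML.S u (n+1))) := by
    rw [coeff_derivative, coeff_derivative, ML.coeff_psExp u hu (le_refl (n+1))]
  have h2 : d⁄dX ℂ (ML.S u (n+1)) = ML.S u n * d⁄dX ℂ u := by
    rw [ML.S, map_sum, Finset.sum_range_succ', ML.S, Finset.sum_mul]
    have h0 : (d⁄dX ℂ) (((Nat.factorial 0 : ℂ))⁻¹ • u ^ 0) = 0 := by simp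
    rw [h0, add_zero]
    apply Finset.sum_congr rfl
    intro k _
    rw [Derivation.map_smul, Derivation.leibniz_pow, Nat.add_sub_cancel]
    have hk : (k.factorial : ℂ) ≠ 0 := Nat.cast_ne_zero.mpr k.factorial_ne_zero
    rw [smul_eq_mul (α := ℂ⟦X⟧), ← Nat.cast_smul_eq_nsmul ℂ, smul_smul, smul_mul_assoc]
    congr 1
    rw [Nat.factorial_succ]
    push_cast
    rw [mul_inv]
    have hk1 : ((k:ℂ) + 1) ≠ 0 := Nat.cast_add_one_ne_zero k
    field_simp
  have h3 : coeff n (d⁄dX ℂ u * psExp u) = coeff n (d⁄dX ℂ u * ML.S u n) := by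
    rw [coeff_mul, coeff_mul]
    apply Finset.sum_congr rfl
    intro p hp
    rw [Finset.HasAntidiagonal.mem_antidiagonal] at hp
    congr 1
    exact ML.coeff_psExp u hu (by omega)
  rw [h1, h2, h3, mul_comm]

lemma ML.hu0 (x : ℂ) : constantCoeff (x • (logOneAdd - logOneSub)) = 0 := by
  rw [← coeff_zero_eq_constantCoeff_apply]
  simp [logOneAdd, logOneSub, coeff_smul]

lemma ML.coeff_deriv_u (x : ℂ) (n : ℕ) :
    coeff n (d⁄dX ℂ (x • (logOneAdd - logOneSub))) = x * (1 + (-1) ^ n) := by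
  rw [coeff_derivative, coeff_smul, map_sub]
  rw [logOneAdd, logOneSub, coeff_mk, coeff_mk, if_neg (Nat.succ_ne_zero n),
    if_neg (Nat.succ_ne_zero n), smul_eq_mul]
  have h : ((n : ℂ) + 1) ≠ 0 := Nat.cast_add_one_ne_zero n
  push_cast
  rw [pow_succ, pow_succ]
  have key : ((-1:ℂ)^n * -1 * -1 / ((n:ℂ)+1) - -(1/((n:ℂ)+1))) * ((n:ℂ)+1)
      = 1 + (-1:ℂ)^n := by
    field_simp
    ring
  rw [mul_assoc, key]

lemma ML.hu' (x : ℂ) :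
    (1 - X ^ 2 : ℂ⟦X⟧) * d⁄dX ℂ (x • (logOneAdd - logOneSub)) = C (2 * x) := by
  ext n
  rw [sub_mul, one_mul, map_sub, coeff_X_pow_mul', coeff_C, ML.coeff_deriv_u]
  rcases n with _ | _ | m
  · rw [if_neg (by omega : ¬ (2:ℕ) ≤ 0), if_pos rfl]
    norm_num
    ring
  · rw [if_neg (by omega : ¬ (2:ℕ) ≤ 1), if_neg (by omega : ¬ (1 = 0))]
    norm_num
  · rw [if_pos (by omega : 2 ≤ m + 1 + 1), if_neg (by omega : ¬ (m + 1 + 1 = 0))]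
    have e : m + 1 + 1 - 2 = m := rfl
    rw [e, ML.coeff_deriv_u, pow_succ, pow_succ]
    ring


lemma ML.genBinom_rec (x : ℂ) (k : ℕ) :
    x * genBinom x k = ((k : ℂ) + 1) * genBinom x (k + 1) + (k : ℂ) * genBinom x k := by
  unfold genBinom
  rw [Finset.prod_range_succ, Nat.factorial_succ]
  have h1 : (k.factorial : ℂ) ≠ 0 := Nat.cast_ne_zero.mpr k.factorial_ne_zero
  have h2 : ((k : ℂ) + 1) ≠ 0 := Nat.cast_add_one_ne_zero k
  push_cast
  field_simp
  ring

lemma ML.choose_id (N i : ℕ) (hi : i < N) :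
    ((N : ℂ) + 2) * ((N + 1).choose (N + 1 - i)) =
      ((i : ℂ) + 1) * (N.choose (N + 1 - i)) + 2 * ((i : ℂ) + 1) * (N.choose (N - i))
        + (N : ℂ) * ((N - 1).choose (N - 1 - i)) := by
  obtain ⟨m, rfl⟩ : ∃ m, N = i + m + 1 := ⟨N - i - 1, by omega⟩
  have e1 : i + m + 1 + 1 - i = m + 2 := by omega
  have e2 : i + m + 1 - i = m + 1 := by omega
  have e3 : i + m + 1 - 1 - i = m := by omega
  have e4 : i + m + 1 - 1 = i + m := by omega
  rw [e1, e2, e3, e4]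
  have hA : (i + m + 1 + 1).choose (m + 2)
      = (i + m + 1).choose (m + 1) + (i + m + 1).choose (m + 2) :=
    Nat.choose_succ_succ _ _
  have hB : (i + m + 1).choose (m + 2) * (m + 2) = (i + m + 1).choose (m + 1) * i := by
    have := Nat.choose_succ_right_eq (i + m + 1) (m + 1)
    simpa [show i + m + 1 - (m + 1) = i by omega] using this
  have hC : (i + m + 1) * (i + m).choose m = (i + m + 1).choose (m + 1) * (m + 1) := by
    simpa [Nat.succ_eq_add_one] using Nat.add_one_mul_choose_eq (i + m) m
  have hA' := congrArg (Nat.cast : ℕ → ℂ) hA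
  have hB' := congrArg (Nat.cast : ℕ → ℂ) hB
  have hC' := congrArg (Nat.cast : ℕ → ℂ) hC
  push_cast at hA' hB' hC' ⊢
  linear_combination ((i : ℂ) + m + 3) * hA' + hB' - hC'

lemma ML.sum_peel2 (f : ℕ → ℂ) (m : ℕ) :
    ∑ i ∈ range (m + 2), f i = ∑ i ∈ range m, f i + f m + f (m + 1) := by
  rw [show m + 2 = (m + 1) + 1 from rfl, Finset.sum_range_succ, Finset.sum_range_succ]

noncomputable def ML.b (x : ℂ) : ℕ → ℂ := fun n =>
  if n = 0 then 1 else
    ∑ i ∈ range n, ((n - 1).choose (n - 1 - i) : ℂ) * 2 ^ (i + 1) * genBinom x (i + 1)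

lemma ML.b_one (x : ℂ) : ML.b x 1 = 2 * x := by
  simp [ML.b, genBinom]

lemma ML.b_two (x : ℂ) : ML.b x 2 = 2 * x ^ 2 := by
  rw [ML.b, if_neg (by omega)]
  rw [Finset.sum_range_succ, Finset.sum_range_succ, Finset.sum_range_zero]
  simp [genBinom, Finset.prod_range_succ]
  ring

lemma ML.brec (x : ℂ) (n : ℕ) :
    ((n : ℂ) + 2) * ML.b x (n + 2) = 2 * x * ML.b x (n + 1) + (n : ℂ) * ML.b x n := by
  rcases n with _ | N
  · rw [ML.b_two, ML.b_one]
    push_cast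
    ring
  rw [ML.b, ML.b, ML.b, if_neg (by omega), if_neg (by omega), if_neg (by omega)]
  rw [show N + 1 + 2 - 1 = N + 2 from by omega, show N + 1 + 1 - 1 = N + 1 from by omega,
      show N + 1 - 1 = N from by omega]
  have hmid : 2 * x * ∑ i ∈ range (N + 1 + 1),
        ((N + 1).choose (N + 1 - i) : ℂ) * 2 ^ (i + 1) * genBinom x (i + 1)
      = (∑ i ∈ range (N + 1 + 1), ((N + 1).choose (N + 1 - i) : ℂ) *
            (((i : ℂ) + 2) * 2 ^ (i + 2) * genBinom x (i + 2)))
        + ∑ i ∈ range (N + 1 + 1), ((N + 1).choose (N + 1 - i) : ℂ) *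
            (2 * ((i : ℂ) + 1) * 2 ^ (i + 1) * genBinom x (i + 1)) := by
    rw [Finset.mul_sum, ← Finset.sum_add_distrib]
    refine Finset.sum_congr rfl fun i _ => ?_
    have hrec := ML.genBinom_rec x (i + 1)
    rw [show i + 1 + 1 = i + 2 from rfl] at hrec
    push_cast at hrec
    linear_combination (((N + 1).choose (N + 1 - i) : ℂ) * 2 ^ (i + 2)) * hrec
  have hshift : ∑ i ∈ range (N + 1 + 2),
        ((N + 1).choose (N + 2 - i) : ℂ) * (((i : ℂ) + 1) * 2 ^ (i + 1) * genBinom x (i + 1))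
      = ∑ i ∈ range (N + 1 + 1), ((N + 1).choose (N + 1 - i) : ℂ) *
          (((i : ℂ) + 2) * 2 ^ (i + 2) * genBinom x (i + 2)) := by
    rw [show N + 1 + 2 = (N + 1 + 1) + 1 from rfl, Finset.sum_range_succ']
    have hc0 : (N + 1).choose (N + 2 - 0) = 0 := Nat.choose_eq_zero_of_lt (by omega)
    simp only [hc0, Nat.cast_zero, zero_mul, add_zero]
    refine Finset.sum_congr rfl fun k _ => ?_
    rw [show N + 2 - (k + 1) = N + 1 - k from by omega, show k + 1 + 1 = k + 2 from rfl]
    push_cast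
    ring
  rw [hmid, ← hshift]
  rw [ML.sum_peel2 _ (N + 1), ML.sum_peel2 _ (N + 1), Finset.sum_range_succ _ (N + 1)]
  have hcs : ((N : ℂ) + 1 + 2) * ∑ i ∈ range (N + 1),
        ((N + 2).choose (N + 2 - i) : ℂ) * 2 ^ (i + 1) * genBinom x (i + 1)
      = (∑ i ∈ range (N + 1), ((N + 1).choose (N + 2 - i) : ℂ) *
            (((i : ℂ) + 1) * 2 ^ (i + 1) * genBinom x (i + 1)))
        + (∑ i ∈ range (N + 1), ((N + 1).choose (N + 1 - i) : ℂ) *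
            (2 * ((i : ℂ) + 1) * 2 ^ (i + 1) * genBinom x (i + 1)))
        + ((N : ℂ) + 1) * ∑ i ∈ range (N + 1),
            (N.choose (N - i) : ℂ) * 2 ^ (i + 1) * genBinom x (i + 1) := by
    rw [Finset.mul_sum, Finset.mul_sum, ← Finset.sum_add_distrib, ← Finset.sum_add_distrib]
    refine Finset.sum_congr rfl fun i hi => ?_
    have hi' : i < N + 1 := Finset.mem_range.mp hi
    have key := ML.choose_id (N + 1) i hi'
    rw [show N + 1 + 1 = N + 2 from rfl, show N + 1 - 1 = N from rfl] at key
    push_cast at key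
    linear_combination (2 ^ (i + 1) * genBinom x (i + 1)) * key
  simp only [show N + 2 - (N + 1) = 1 from by omega, show N + 2 - (N + 1 + 1) = 0 from by omega,
    show N + 1 - (N + 1) = 0 from by omega, Nat.choose_one_right, Nat.choose_zero_right]
  push_cast at hcs ⊢
  linear_combination hcs

lemma ML.hODE (x : ℂ) :
    (1 - X ^ 2 : ℂ⟦X⟧) * d⁄dX ℂ (psExp (x • (logOneAdd - logOneSub)))
      = C (2 * x) * psExp (x • (logOneAdd - logOneSub)) := by
  rw [ML.deriv_psExp _ (ML.hu0 x), ← mul_assoc, ML.hu' x]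

lemma ML.a0 (x : ℂ) : coeff 0 (psExp (x • (logOneAdd - logOneSub))) = 1 := by
  rw [psExp, psComp, coeff_mk]
  rw [Finset.sum_range_one, pow_zero]
  simp [PowerSeries.coeff_zero_eq_constantCoeff, PowerSeries.constantCoeff_exp]

lemma ML.coeff_ode (x : ℂ) (n : ℕ) :
    coeff (n + 1) (psExp (x • (logOneAdd - logOneSub))) * ((n : ℂ) + 1)
      - (if 2 ≤ n then coeff (n - 2) (d⁄dX ℂ (psExp (x • (logOneAdd - logOneSub)))) else 0)
      = 2 * x * coeff n (psExp (x • (logOneAdd - logOneSub))) := by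
  have hn := congrArg (coeff n) (ML.hODE x)
  rw [sub_mul, one_mul, map_sub, coeff_X_pow_mul', coeff_C_mul, coeff_derivative] at hn
  exact hn

lemma ML.a1 (x : ℂ) :
    coeff 1 (psExp (x • (logOneAdd - logOneSub)))
      = 2 * x * coeff 0 (psExp (x • (logOneAdd - logOneSub))) := by
  have h := ML.coeff_ode x 0
  rw [if_neg (by omega)] at h
  push_cast at h
  linear_combination h

lemma ML.arec (x : ℂ) (n : ℕ) :
    ((n : ℂ) + 2) * coeff (n + 2) (psExp (x • (logOneAdd - logOneSub)))
      = 2 * x * coeff (n + 1) (psExp (x • (logOneAdd - logOneSub)))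
        + (n : ℂ) * coeff n (psExp (x • (logOneAdd - logOneSub))) := by
  rcases n with _ | m
  · have h := ML.coeff_ode x 1
    rw [if_neg (by omega)] at h
    push_cast at h ⊢
    linear_combination h
  · have h := ML.coeff_ode x (m + 2)
    rw [if_pos (by omega), show m + 2 - 2 = m from rfl, coeff_derivative] at h
    push_cast at h ⊢
    linear_combination h

lemma ML.key (x : ℂ) (n : ℕ) :
    coeff n (psExp (x • (logOneAdd - logOneSub))) = ML.b x n := by
  have h0 : coeff 0 (psExp (x • (logOneAdd - logOneSub))) = ML.b x 0 := by
    rw [ML.a0]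
    simp [ML.b]
  have h1 : coeff 1 (psExp (x • (logOneAdd - logOneSub))) = ML.b x 1 := by
    rw [ML.a1, ML.a0, ML.b_one, mul_one]
  have key : ∀ m : ℕ, coeff m (psExp (x • (logOneAdd - logOneSub))) = ML.b x m ∧
      coeff (m + 1) (psExp (x • (logOneAdd - logOneSub))) = ML.b x (m + 1) := by
    intro m
    induction m with
    | zero => exact ⟨h0, h1⟩
    | succ k ih =>
      refine ⟨ih.2, ?_⟩
      have h2 : ((k : ℂ) + 2) ≠ 0 := by
        have h3 : ((k + 2 : ℕ) : ℂ) ≠ 0 := Nat.cast_ne_zero.mpr (by omega)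
        push_cast at h3
        exact h3
      have ha := ML.arec x k
      have hb := ML.brec x k
      rw [ih.1, ih.2] at ha
      exact mul_left_cancel₀ h2 (ha.trans hb.symm)
  exact (key n).1

/-- Mittag-Leffler polynomials, defined by `∑ Mₙ(x) zⁿ/n! = ((1+z)/(1-z))^x`,
satisfy `M₀(x) = 1` and `Mₙ(x) = n! ∑_{k=1}^n C(n-1, n-k) 2^k C(x,k)` for `n ≥ 1`. -/
theorem mittagLeffler_expansion (x : ℂ) (M : ℕ → ℂ)
    (hM : (PowerSeries.mk fun n => M n / (n.factorial : ℂ)) =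
      psExp (x • (logOneAdd - logOneSub))) :
    M 0 = 1 ∧
      ∀ n : ℕ, 1 ≤ n →
        M n = (n.factorial : ℂ) *
          ∑ k ∈ Finset.Icc 1 n,
            ((n - 1).choose (n - k) : ℂ) * 2 ^ k * genBinom x k := by
  have hMn : ∀ n : ℕ, M n = (n.factorial : ℂ) * ML.b x n := by
    intro n
    have h := congrArg (coeff n) hM
    rw [coeff_mk, ML.key x n] at h
    have hfac : (n.factorial : ℂ) ≠ 0 := Nat.cast_ne_zero.mpr n.factorial_ne_zero
    field_simp at h
    rw [h]
  constructor
  · rw [hMn 0, ML.b]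
    norm_num
  · intro n hn
    rw [hMn n]
    congr 1
    rw [ML.b, if_neg (by omega)]
    rw [← Finset.Ico_add_one_right_eq_Icc, Finset.sum_Ico_eq_sum_range]
    rw [show n + 1 - 1 = n from rfl]
    refine Finset.sum_congr rfl fun i _ => ?_
    rw [show 1 + i = i + 1 from by omega, show n - (i + 1) = n - 1 - i from by omega]
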